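/- Let A be a Noetherian commutative ring, let T be a Noetherian A-algebra, and let I ⊆ T be an ideal such that the composition A → T → T/I is finite (T/I is a finitely generated A-module). Let y_1, ..., y_n be generators of the ideal I. Then the A-algebra homomorphism A[x_1, ..., x_n] → T sending x_i to y_i induces a ring homomorphism from the power series ring A[[x_1, ..., x_n]] to the I-adic completion T̂ = lim_t T/I^t, and this ring homomorphism is finite: T̂ is a finitely generated module over A[[x_1, ..., x_n]]. -/

import Mathlib

open Finset

namespace Stmt3Aux

variable {A : Type} [CommRing A] {T : Type} [CommRing T] [Algebra A T]
variable {n : ℕ}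

/-- Total degree of a multi-index. -/
def deg (d : Fin n →₀ ℕ) : ℕ := ∑ i, d i

lemma deg_add (d e : Fin n →₀ ℕ) : deg (d + e) = deg d + deg e := by
  simp [deg, Finset.sum_add_distrib]

lemma deg_zero : deg (0 : Fin n →₀ ℕ) = 0 := by simp [deg]

lemma deg_single (i : Fin n) : deg (Finsupp.single i 1) = 1 := by
  classical
  simp [deg, Finsupp.single_apply]

lemma apply_le_deg (d : Fin n →₀ ℕ) (i : Fin n) : d i ≤ deg d :=
  Finset.single_le_sum (fun _ _ => Nat.zero_le _) (Finset.mem_univ i)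

lemma deg_eq_zero_iff (d : Fin n →₀ ℕ) : deg d = 0 ↔ d = 0 := by
  constructor
  · intro h
    ext i
    have := apply_le_deg d i
    simp only [Finsupp.coe_zero, Pi.zero_apply]
    omega
  · rintro rfl; exact deg_zero

variable (y : Fin n → T)

/-- The monomial `y ^ d`. -/
noncomputable def md (d : Fin n →₀ ℕ) : T := ∏ i, y i ^ d i

lemma md_zero : md y 0 = 1 := by simp [md]

lemma md_add (d e : Fin n →₀ ℕ) : md y (d + e) = md y d * md y e := by
  simp [md, pow_add, Finset.prod_mul_distrib]

lemma md_single (i : Fin n) : md y (Finsupp.single i 1) = y i := by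
  classical
  rw [md, Finset.prod_eq_single i]
  · simp
  · intro b _ hb
    rw [Finsupp.single_eq_of_ne' (Ne.symm hb), pow_zero]
  · intro h; exact absurd (Finset.mem_univ i) h

lemma md_mem (I : Ideal T) (hy : Ideal.span (Set.range y) = I) (d : Fin n →₀ ℕ) :
    md y d ∈ I ^ deg d := by
  rw [md, deg, ← Finset.prod_pow_eq_pow_sum]
  exact Ideal.prod_mem_prod fun i _ =>
    Ideal.pow_mem_pow (hy ▸ Ideal.subset_span ⟨i, rfl⟩) _

/-- Multi-indices of total degree `< t`. -/
noncomputable def Dset (t : ℕ) : Finset (Fin n →₀ ℕ) :=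
  (Finset.Iic (Finsupp.equivFunOnFinite.symm fun _ => t)).filter fun d => deg d < t

lemma mem_Dset {t : ℕ} {d : Fin n →₀ ℕ} : d ∈ Dset t ↔ deg d < t := by
  constructor
  · intro h; exact (Finset.mem_filter.mp h).2
  · intro h
    refine Finset.mem_filter.mpr ⟨Finset.mem_Iic.mpr ?_, h⟩
    intro i
    have := apply_le_deg d i
    simpa using by omega

/-- Multi-indices of total degree `= k`. -/
noncomputable def Eset (k : ℕ) : Finset (Fin n →₀ ℕ) :=
  (Finset.Iic (Finsupp.equivFunOnFinite.symm fun _ => k)).filter fun d => deg d = k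

lemma mem_Eset {k : ℕ} {d : Fin n →₀ ℕ} : d ∈ Eset k ↔ deg d = k := by
  constructor
  · intro h; exact (Finset.mem_filter.mp h).2
  · intro h
    refine Finset.mem_filter.mpr ⟨Finset.mem_Iic.mpr ?_, h⟩
    intro i
    have := apply_le_deg d i
    simpa using by omega

/-- Truncated evaluation of a power series. -/
noncomputable def seqFun (F : MvPowerSeries (Fin n) A) (t : ℕ) : T :=
  ∑ d ∈ Dset t, algebraMap A T (MvPowerSeries.coeff d F) * md y d

lemma smul_top_eq (I : Ideal T) (t : ℕ) : (I ^ t • ⊤ : Ideal T) = I ^ t := by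
  ext x; simp

variable (I : Ideal T)

lemma seqFun_sub_mem (hy : Ideal.span (Set.range y) = I) (F : MvPowerSeries (Fin n) A) {t t' : ℕ} (h : t ≤ t') :
    seqFun y F t' - seqFun y F t ∈ I ^ t := by
  classical
  have hsub : Dset t ⊆ Dset (n := n) t' := fun d hd =>
    mem_Dset.mpr (lt_of_lt_of_le (mem_Dset.mp hd) h)
  rw [seqFun, seqFun, ← Finset.sum_sdiff hsub, add_sub_cancel_right]
  refine Ideal.sum_mem _ fun d hd => ?_
  have hd' : ¬ deg d < t := fun hc => (Finset.mem_sdiff.mp hd).2 (mem_Dset.mpr hc)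
  exact Ideal.mul_mem_left _ _
    (Ideal.pow_le_pow_right (by omega) (md_mem y I hy d))

/-- The truncated evaluations form an adic Cauchy sequence. -/
noncomputable def seqC (hy : Ideal.span (Set.range y) = I) (F : MvPowerSeries (Fin n) A) :
    AdicCompletion.AdicCauchySequence I T :=
  AdicCompletion.AdicCauchySequence.mk I T (seqFun y F) (fun t => by
    rw [SModEq.sub_mem]
    have heq : (I ^ t • ⊤ : Submodule T T) = I ^ t := smul_top_eq I t
    rw [heq]
    have h := seqFun_sub_mem y I hy F (Nat.le_succ t)
    simpa [neg_sub] using neg_mem h)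

lemma seqC_apply (hy : Ideal.span (Set.range y) = I) (F : MvPowerSeries (Fin n) A) (t : ℕ) :
    (seqC y I hy F).val t = seqFun y F t := rfl

lemma mk_eq_mk_of (s s' : AdicCompletion.AdicCauchySequence I T)
    (h : ∀ t, s.val t - s'.val t ∈ I ^ t) :
    AdicCompletion.mk I T s = AdicCompletion.mk I T s' := by
  ext t
  simp only [AdicCompletion.mk_apply_coe, Submodule.mkQ_apply]
  rw [Submodule.Quotient.eq]
  rw [smul_top_eq]
  exact h t

lemma val_algebraMap (x : T) (t : ℕ) :
    (algebraMap T (AdicCompletion I T) x).val t = Submodule.Quotient.mk x := rfl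

lemma mk_eq_algebraMap (s : AdicCompletion.AdicCauchySequence I T) (x : T)
    (h : ∀ t, s.val t - x ∈ I ^ t) :
    AdicCompletion.mk I T s = algebraMap T (AdicCompletion I T) x := by
  ext t
  rw [AdicCompletion.mk_apply_coe, Submodule.mkQ_apply, val_algebraMap,
    Submodule.Quotient.eq, smul_top_eq]
  exact h t


lemma seqFun_add (F G : MvPowerSeries (Fin n) A) (t : ℕ) :
    seqFun y (F + G) t = seqFun y F t + seqFun y G t := by
  rw [seqFun, seqFun, seqFun, ← Finset.sum_add_distrib]
  refine Finset.sum_congr rfl fun d _ => ?_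
  rw [map_add, map_add, add_mul]

lemma seqFun_mul (hy : Ideal.span (Set.range y) = I) (F G : MvPowerSeries (Fin n) A) (t : ℕ) :
    seqFun y (F * G) t - seqFun y F t * seqFun y G t ∈ I ^ t := by
  classical
  have hprod : seqFun y F t * seqFun y G t =
      ∑ p ∈ Dset t ×ˢ Dset t,
        algebraMap A T (MvPowerSeries.coeff p.1 F)
          * algebraMap A T (MvPowerSeries.coeff p.2 G) * md y (p.1 + p.2) := by
    rw [seqFun, seqFun, Finset.sum_mul_sum, Finset.sum_product]
    refine Finset.sum_congr rfl fun d _ => Finset.sum_congr rfl fun e _ => ?_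
    rw [md_add]; ring
  have hDB : (Dset t).biUnion Finset.HasAntidiagonal.antidiagonal =
      (Dset (n := n) t ×ˢ Dset t).filter (fun p => deg (p.1 + p.2) < t) := by
    ext p
    simp only [Finset.mem_biUnion, Finset.mem_filter, Finset.mem_product,
      Finset.HasAntidiagonal.mem_antidiagonal, mem_Dset]
    constructor
    · rintro ⟨c, hc, rfl⟩
      have h1 : deg p.1 ≤ deg (p.1 + p.2) := by rw [deg_add]; omega
      have h2 : deg p.2 ≤ deg (p.1 + p.2) := by rw [deg_add]; omega
      exact ⟨⟨by omega, by omega⟩, hc⟩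
    · rintro ⟨⟨_, _⟩, h⟩
      exact ⟨p.1 + p.2, h, rfl⟩
  have hFG : seqFun y (F * G) t =
      ∑ p ∈ (Dset (n := n) t ×ˢ Dset t).filter (fun p => deg (p.1 + p.2) < t),
        algebraMap A T (MvPowerSeries.coeff p.1 F)
          * algebraMap A T (MvPowerSeries.coeff p.2 G) * md y (p.1 + p.2) := by
    rw [seqFun, ← hDB, Finset.sum_biUnion]
    · refine Finset.sum_congr rfl fun c _ => ?_
      rw [MvPowerSeries.coeff_mul, map_sum, Finset.sum_mul]
      refine Finset.sum_congr rfl fun p hp => ?_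
      rw [map_mul, (Finset.HasAntidiagonal.mem_antidiagonal.mp hp : p.1 + p.2 = c)]
    · intro c₁ _ c₂ _ hne
      refine Finset.disjoint_left.mpr fun p hp1 hp2 => hne ?_
      rw [← (Finset.HasAntidiagonal.mem_antidiagonal.mp hp1 : p.1 + p.2 = c₁),
        (Finset.HasAntidiagonal.mem_antidiagonal.mp hp2 : p.1 + p.2 = c₂)]
  rw [hFG, hprod, ← Finset.sum_filter_add_sum_filter_not (Dset t ×ˢ Dset t)
    (fun p => deg (p.1 + p.2) < t)]
  rw [sub_add_eq_sub_sub, sub_self, zero_sub]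
  refine neg_mem (Ideal.sum_mem _ fun p hp => ?_)
  have hp' : ¬ deg (p.1 + p.2) < t := (Finset.mem_filter.mp hp).2
  exact Ideal.mul_mem_left _ _
    (Ideal.pow_le_pow_right (by omega) (md_mem y I hy (p.1 + p.2)))

/-- The induced ring homomorphism from the power series ring to the adic completion. -/
noncomputable def fHom (hy : Ideal.span (Set.range y) = I) :
    MvPowerSeries (Fin n) A →+* AdicCompletion I T where
  toFun F := AdicCompletion.mk I T (seqC y I hy F)
  map_one' := by
    rw [show (1 : AdicCompletion I T) = algebraMap T (AdicCompletion I T) 1 from (map_one _).symm]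
    refine mk_eq_algebraMap I _ _ fun t => ?_
    classical
    match t with
    | 0 => simp
    | (t + 1) =>
      rw [seqC_apply, seqFun, Finset.sum_eq_single 0]
      · rw [MvPowerSeries.coeff_one, if_pos rfl, map_one, one_mul, md_zero, sub_self]
        exact zero_mem _
      · intro d _ hd
        rw [MvPowerSeries.coeff_one, if_neg hd, map_zero, zero_mul]
      · intro h
        exact absurd (mem_Dset.mpr (by rw [deg_zero]; omega)) h
  map_mul' F G := by
    have h1 : AdicCompletion.mk I T (seqC y I hy F) * AdicCompletion.mk I T (seqC y I hy G)
        = AdicCompletion.mk I T (seqC y I hy F * seqC y I hy G) := rfl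
    rw [h1]
    refine mk_eq_mk_of I _ _ fun t => ?_
    exact seqFun_mul y I hy F G t
  map_zero' := by
    rw [show (0 : AdicCompletion I T) = algebraMap T (AdicCompletion I T) 0 from (map_zero _).symm]
    refine mk_eq_algebraMap I _ _ fun t => ?_
    rw [seqC_apply, seqFun]
    rw [Finset.sum_eq_zero fun d _ => by rw [map_zero, map_zero, zero_mul]]
    simpa using zero_mem (I ^ t)
  map_add' F G := by
    have h1 : seqC y I hy (F + G) = seqC y I hy F + seqC y I hy G := by
      apply Subtype.ext
      funext t
      exact seqFun_add y F G t
    show AdicCompletion.mk I T _ = AdicCompletion.mk I T _ + AdicCompletion.mk I T _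
    rw [h1, map_add]


lemma fHom_C (hy : Ideal.span (Set.range y) = I) (a : A) :
    fHom y I hy ((MvPowerSeries.C : A →+* MvPowerSeries (Fin n) A) a) =
      algebraMap T (AdicCompletion I T) (algebraMap A T a) := by
  classical
  have hrw : fHom y I hy ((MvPowerSeries.C : A →+* MvPowerSeries (Fin n) A) a)
      = AdicCompletion.mk I T (seqC y I hy ((MvPowerSeries.C : A →+* MvPowerSeries (Fin n) A) a)) := rfl
  rw [hrw]
  refine mk_eq_algebraMap I _ _ fun t => ?_
  match t with
  | 0 => simp
  | (t + 1) =>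
    rw [seqC_apply, seqFun, Finset.sum_eq_single 0]
    · rw [MvPowerSeries.coeff_C, if_pos rfl, md_zero, mul_one, sub_self]
      exact zero_mem _
    · intro d _ hd
      rw [MvPowerSeries.coeff_C, if_neg hd, map_zero, zero_mul]
    · intro h
      exact absurd (mem_Dset.mpr (by rw [deg_zero]; omega)) h

lemma fHom_X (hy : Ideal.span (Set.range y) = I) (i : Fin n) :
    fHom y I hy (MvPowerSeries.X i : MvPowerSeries (Fin n) A)
      = algebraMap T (AdicCompletion I T) (y i) := by
  classical
  have hrw : fHom y I hy (MvPowerSeries.X i : MvPowerSeries (Fin n) A)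
      = AdicCompletion.mk I T (seqC y I hy (MvPowerSeries.X i)) := rfl
  rw [hrw]
  refine mk_eq_algebraMap I _ _ fun t => ?_
  match t with
  | 0 => simp
  | 1 =>
    rw [seqC_apply, seqFun, Finset.sum_eq_zero, zero_sub, pow_one]
    · exact neg_mem (hy ▸ Ideal.subset_span ⟨i, rfl⟩)
    · intro d hd
      have hdeg : deg d = 0 := by have := mem_Dset.mp hd; omega
      have hne : d ≠ Finsupp.single i 1 := by
        intro h
        rw [h, deg_single] at hdeg
        omega
      rw [MvPowerSeries.coeff_X, if_neg hne, map_zero, zero_mul]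
  | (t + 2) =>
    rw [seqC_apply, seqFun, Finset.sum_eq_single (Finsupp.single i 1)]
    · rw [MvPowerSeries.coeff_X, if_pos rfl, map_one, one_mul, md_single, sub_self]
      exact zero_mem _
    · intro d _ hd
      rw [MvPowerSeries.coeff_X, if_neg hd, map_zero, zero_mul]
    · intro h
      exact absurd (mem_Dset.mpr (by rw [deg_single]; omega)) h

/-- The ideal of power series with vanishing coefficients in degrees `< t`. -/
def lowIdeal (t : ℕ) : Ideal (MvPowerSeries (Fin n) A) where
  carrier := {F | ∀ d : Fin n →₀ ℕ, deg d < t → MvPowerSeries.coeff d F = 0}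
  add_mem' := fun {F G} hF hG d hd => by rw [map_add, hF d hd, hG d hd, add_zero]
  zero_mem' := fun d hd => by simp
  smul_mem' := fun c F hF d hd => by
    classical
    rw [smul_eq_mul, MvPowerSeries.coeff_mul]
    refine Finset.sum_eq_zero fun p hp => ?_
    have hpd : p.1 + p.2 = d := Finset.HasAntidiagonal.mem_antidiagonal.mp hp
    have h2 : deg p.2 < t := by
      have : deg p.1 + deg p.2 = deg d := by rw [← deg_add, hpd]
      omega
    rw [hF p.2 h2, mul_zero]

lemma mem_lowIdeal_iff {t : ℕ} {F : MvPowerSeries (Fin n) A} :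
    F ∈ lowIdeal (A := A) (n := n) t ↔
      ∀ d : Fin n →₀ ℕ, deg d < t → MvPowerSeries.coeff d F = 0 := Iff.rfl

lemma lowIdeal_mul_le (a b : ℕ) :
    lowIdeal (A := A) (n := n) a * lowIdeal b ≤ lowIdeal (a + b) := by
  classical
  refine Ideal.mul_le.mpr fun F hF G hG => ?_
  intro d hd
  rw [MvPowerSeries.coeff_mul]
  refine Finset.sum_eq_zero fun p hp => ?_
  have hpd : p.1 + p.2 = d := Finset.HasAntidiagonal.mem_antidiagonal.mp hp
  have hsum : deg p.1 + deg p.2 = deg d := by rw [← deg_add, hpd]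
  rcases Nat.lt_or_ge (deg p.1) a with h | h
  · rw [hF p.1 h, zero_mul]
  · rw [hG p.2 (by omega), mul_zero]

lemma span_X_pow_le (t : ℕ) :
    (Ideal.span (Set.range (MvPowerSeries.X : Fin n → MvPowerSeries (Fin n) A))) ^ t ≤
      lowIdeal t := by
  classical
  induction t with
  | zero =>
    rw [pow_zero, Ideal.one_eq_top]
    exact fun F _ d hd => absurd hd (Nat.not_lt_zero _)
  | succ t ih =>
    rw [pow_succ]
    refine le_trans (Ideal.mul_mono ih ?_) (lowIdeal_mul_le t 1)
    rw [Ideal.span_le]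
    rintro _ ⟨i, rfl⟩
    intro d hd
    have hd0 : d = 0 := (deg_eq_zero_iff d).mp (by omega)
    have hne : d ≠ Finsupp.single i 1 := by
      rw [hd0]
      intro h
      have := deg_single (n := n) i
      rw [← h, deg_zero] at this
      omega
    rw [MvPowerSeries.coeff_X, if_neg hne]

lemma fHom_continuous (hy : Ideal.span (Set.range y) = I) (t : ℕ)
    (F : MvPowerSeries (Fin n) A)
    (hF : F ∈ (Ideal.span
      (Set.range (MvPowerSeries.X : Fin n → MvPowerSeries (Fin n) A))) ^ t) :
    AdicCompletion.evalₐ I t (fHom y I hy F) = 0 := by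
  have h0 : seqFun y F t = 0 := by
    rw [seqFun]
    refine Finset.sum_eq_zero fun d hd => ?_
    rw [span_X_pow_le t hF d (mem_Dset.mp hd), map_zero, zero_mul]
  have : fHom y I hy F = AdicCompletion.mk I T (seqC y I hy F) := rfl
  rw [this, AdicCompletion.evalₐ_mk, seqC_apply, h0, map_zero]


variable {m : ℕ}

/-- A linear combination of the products `y^d * g j` with `deg d = k`. -/
noncomputable def comb (g : Fin m → T) (c : (Fin n →₀ ℕ) → Fin m → A) (k : ℕ) : T :=
  ∑ d ∈ Eset k, ∑ j, algebraMap A T (c d j) * (md y d * g j)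

lemma comb_add (g : Fin m → T) (c₁ c₂ : (Fin n →₀ ℕ) → Fin m → A) (k : ℕ) :
    comb y g (fun d j => c₁ d j + c₂ d j) k = comb y g c₁ k + comb y g c₂ k := by
  rw [comb, comb, comb, ← Finset.sum_add_distrib]
  refine Finset.sum_congr rfl fun d _ => ?_
  rw [← Finset.sum_add_distrib]
  refine Finset.sum_congr rfl fun j _ => ?_
  rw [map_add, add_mul]

lemma comb_zero (g : Fin m → T) (k : ℕ) : comb (A := A) y g (fun _ _ => 0) k = 0 := by
  simp [comb]

lemma monomial_span (hy : Ideal.span (Set.range y) = I) (k : ℕ) :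
    I ^ k ≤ Ideal.span {x : T | ∃ d, deg d = k ∧ x = md y d} := by
  induction k with
  | zero =>
    have h1 : (1 : T) ∈ Ideal.span {x : T | ∃ d, deg d = 0 ∧ x = md y d} :=
      Ideal.subset_span ⟨0, deg_zero, (md_zero y).symm⟩
    intro x _
    simpa using Ideal.mul_mem_left _ x h1
  | succ k ih =>
    rw [pow_succ]
    refine le_trans (Ideal.mul_mono ih (le_of_eq hy.symm)) ?_
    rw [Ideal.span_mul_span']
    rw [Ideal.span_le]
    rintro _ ⟨_, ⟨d, hd, rfl⟩, _, ⟨i, rfl⟩, rfl⟩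
    exact Ideal.subset_span ⟨d + Finsupp.single i 1,
      by rw [deg_add, deg_single, hd], by rw [md_add, md_single]⟩

lemma step (hy : Ideal.span (Set.range y) = I) (g : Fin m → T)
    (hg : ∀ τ : T, ∃ c : Fin m → A, τ - ∑ j, c j • g j ∈ I) :
    ∀ (k : ℕ) (z : T), z ∈ I ^ k →
      ∃ c : (Fin n →₀ ℕ) → Fin m → A, z - comb y g c k ∈ I ^ (k + 1) := by
  classical
  intro k z hz
  have hz' : z ∈ Submodule.span T {x : T | ∃ d, deg d = k ∧ x = md y d} :=
    monomial_span y I hy k hz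
  rw [Submodule.mem_span_set'] at hz'
  obtain ⟨N, τ, w, hw⟩ := hz'
  rw [← hw]
  refine Finset.sum_induction _ (fun z => ∃ c, z - comb y g c k ∈ I ^ (k + 1)) ?_ ?_ ?_
  · rintro z₁ z₂ ⟨c₁, hc₁⟩ ⟨c₂, hc₂⟩
    refine ⟨fun d j => c₁ d j + c₂ d j, ?_⟩
    rw [comb_add]
    have := add_mem hc₁ hc₂
    rwa [← add_sub_add_comm] at this
  · exact ⟨fun _ _ => 0, by rw [comb_zero, sub_zero]; exact zero_mem _⟩
  · intro i _
    obtain ⟨d, hdeg, hEq⟩ := (w i).2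
    obtain ⟨a, ha⟩ := hg (τ i)
    refine ⟨fun d' j => if d' = d then a j else 0, ?_⟩
    have hcomb : comb y g (fun d' j => if d' = d then a j else 0) k
        = ∑ j, algebraMap A T (a j) * (md y d * g j) := by
      rw [comb, Finset.sum_eq_single d]
      · simp
      · intro d' _ hd'
        refine Finset.sum_eq_zero fun j _ => ?_
        rw [if_neg hd', map_zero, zero_mul]
      · intro h
        exact absurd (mem_Eset.mpr hdeg) h
    rw [hcomb, hEq]
    have hkey : τ i • md y d - ∑ j, algebraMap A T (a j) * (md y d * g j)
        = (τ i - ∑ j, a j • g j) * md y d := by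
      rw [sub_mul, Finset.sum_mul, smul_eq_mul]
      congr 1
      refine Finset.sum_congr rfl fun j _ => ?_
      rw [Algebra.smul_def]
      ring
    rw [hkey, pow_succ']
    exact Ideal.mul_mem_mul ha (hdeg ▸ md_mem y I hy d)

/-- Successive approximation of an adic Cauchy sequence by combinations of monomials. -/
noncomputable def appr (g : Fin m → T)
    (hstep : ∀ (k : ℕ) (z : T), z ∈ I ^ k →
      ∃ c : (Fin n →₀ ℕ) → Fin m → A, z - comb y g c k ∈ I ^ (k + 1))
    (χ : AdicCompletion.AdicCauchySequence I T) :
    ∀ t : ℕ, {p : ((Fin n →₀ ℕ) → Fin m → A) × T // χ.val t - p.2 ∈ I ^ t}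
  | 0 => ⟨(fun _ _ => (0 : A), 0), by rw [pow_zero, Ideal.one_eq_top]; exact Submodule.mem_top⟩
  | (t + 1) => by
    have prev := appr g hstep χ t
    have hz : χ.val (t + 1) - prev.val.2 ∈ I ^ t := by
      have h1 : χ.val (t + 1) - χ.val t ∈ I ^ t := by
        have h := (χ.property (Nat.le_succ t))
        rw [SModEq.sub_mem, smul_top_eq] at h
        simpa [neg_sub] using neg_mem h
      have h2 := add_mem h1 prev.prop
      rwa [sub_add_sub_cancel] at h2
    exact ⟨(Classical.choose (hstep t _ hz),
        prev.val.2 + comb y g (Classical.choose (hstep t _ hz)) t), by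
      have hc := Classical.choose_spec (hstep t _ hz)
      rwa [sub_sub] at hc⟩

lemma appr_snd_succ (g : Fin m → T)
    (hstep : ∀ (k : ℕ) (z : T), z ∈ I ^ k →
      ∃ c : (Fin n →₀ ℕ) → Fin m → A, z - comb y g c k ∈ I ^ (k + 1))
    (χ : AdicCompletion.AdicCauchySequence I T) (t : ℕ) :
    (appr y I g hstep χ (t + 1)).val.2 =
      (appr y I g hstep χ t).val.2 +
        comb y g ((appr y I g hstep χ (t + 1)).val.1) t := rfl

lemma appr_sum (g : Fin m → T)
    (hstep : ∀ (k : ℕ) (z : T), z ∈ I ^ k →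
      ∃ c : (Fin n →₀ ℕ) → Fin m → A, z - comb y g c k ∈ I ^ (k + 1))
    (χ : AdicCompletion.AdicCauchySequence I T) (t : ℕ) :
    (appr y I g hstep χ t).val.2 =
      ∑ k ∈ Finset.range t, comb y g ((appr y I g hstep χ (k + 1)).val.1) k := by
  induction t with
  | zero => rfl
  | succ t ih => rw [Finset.sum_range_succ, ← ih, appr_snd_succ]

/-- The power series whose coefficients come from the successive approximation. -/
noncomputable def Fc (g : Fin m → T)
    (hstep : ∀ (k : ℕ) (z : T), z ∈ I ^ k →
      ∃ c : (Fin n →₀ ℕ) → Fin m → A, z - comb y g c k ∈ I ^ (k + 1))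
    (χ : AdicCompletion.AdicCauchySequence I T) (j : Fin m) :
    MvPowerSeries (Fin n) A :=
  fun d => (appr y I g hstep χ (deg d + 1)).val.1 d j

lemma sum_seqFun_eq (g : Fin m → T)
    (hstep : ∀ (k : ℕ) (z : T), z ∈ I ^ k →
      ∃ c : (Fin n →₀ ℕ) → Fin m → A, z - comb y g c k ∈ I ^ (k + 1))
    (χ : AdicCompletion.AdicCauchySequence I T) (t : ℕ) :
    ∑ j, seqFun y (Fc y I g hstep χ j) t * g j = (appr y I g hstep χ t).val.2 := by
  classical
  have h1 : ∀ j, seqFun y (Fc y I g hstep χ j) t * g j =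
      ∑ d ∈ Dset t,
        algebraMap A T ((appr y I g hstep χ (deg d + 1)).val.1 d j) * (md y d * g j) := by
    intro j
    rw [seqFun, Finset.sum_mul]
    refine Finset.sum_congr rfl fun d _ => ?_
    rw [MvPowerSeries.coeff_apply]
    show algebraMap A T ((appr y I g hstep χ (deg d + 1)).val.1 d j) * md y d * g j = _
    ring
  rw [Finset.sum_congr rfl fun j _ => h1 j, Finset.sum_comm, appr_sum]
  rw [← Finset.sum_fiberwise_of_maps_to
    (g := deg) (fun d hd => Finset.mem_range.mpr (mem_Dset.mp hd))]
  refine Finset.sum_congr rfl fun k hk => ?_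
  have hk' : k < t := Finset.mem_range.mp hk
  have hfe : (Dset t).filter (fun d => deg d = k) = Eset (n := n) k := by
    ext d
    simp only [Finset.mem_filter, mem_Dset, mem_Eset]
    omega
  rw [hfe, comb]
  refine Finset.sum_congr rfl fun d hd => ?_
  rw [mem_Eset.mp hd]

end Stmt3Aux

/-- **Finiteness of the completion over a power series ring.**  Let `A` be Noetherian, `T` a
Noetherian `A`-algebra and `I = (y₁, …, yₙ) ⊆ T` an ideal with `T/I` a finitely generated
`A`-module.  Then the evaluation `A[x₁,…,xₙ] → T`, `xᵢ ↦ yᵢ`, induces a (necessarily unique)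
continuous ring homomorphism `A[[x₁,…,xₙ]] → T̂ = lim_t T/Iᵗ`, and this homomorphism is finite.

Continuity is expressed by (iii): for each `t`, the composite of `f` with the projection
`T̂ → T/Iᵗ` kills `(x₁,…,xₙ)ᵗ`; conditions (i)–(iii) uniquely determine `f`. -/
theorem stmt3 (A : Type) [CommRing A] [IsNoetherianRing A]
    (T : Type) [CommRing T] [Algebra A T] [IsNoetherianRing T]
    (I : Ideal T) [Module.Finite A (T ⧸ I)]
    (n : ℕ) (y : Fin n → T) (hy : Ideal.span (Set.range y) = I) :
    ∃ f : MvPowerSeries (Fin n) A →+* AdicCompletion I T,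
      (∀ a : A, f ((MvPowerSeries.C : A →+* MvPowerSeries (Fin n) A) a) =
          algebraMap T (AdicCompletion I T) (algebraMap A T a)) ∧
      (∀ i : Fin n, f (MvPowerSeries.X i) = algebraMap T (AdicCompletion I T) (y i)) ∧
      (∀ t : ℕ, ∀ F ∈ (Ideal.span
          (Set.range (MvPowerSeries.X : Fin n → MvPowerSeries (Fin n) A))) ^ t,
        AdicCompletion.evalₐ I t (f F) = 0) ∧
      f.Finite := by
  classical
  refine ⟨Stmt3Aux.fHom y I hy, fun a => Stmt3Aux.fHom_C y I hy a,
    fun i => Stmt3Aux.fHom_X y I hy i,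
    fun t F hF => Stmt3Aux.fHom_continuous y I hy t F hF, ?_⟩
  -- Finiteness
  obtain ⟨m, gbar, hgbar⟩ := Module.Finite.exists_fin (R := A) (M := T ⧸ I)
  choose g hg using fun j => Ideal.Quotient.mk_surjective (I := I) (gbar j)
  have hrepr : ∀ τ : T, ∃ c : Fin m → A, τ - ∑ j, c j • g j ∈ I := by
    intro τ
    have hmem : Ideal.Quotient.mk I τ ∈ Submodule.span A (Set.range gbar) := by
      rw [hgbar]; exact Submodule.mem_top
    rw [Submodule.mem_span_range_iff_exists_fun] at hmem
    obtain ⟨c, hc⟩ := hmem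
    refine ⟨c, ?_⟩
    have h2 : Ideal.Quotient.mk I (∑ j, c j • g j) = Ideal.Quotient.mk I τ := by
      rw [← Ideal.Quotient.mkₐ_eq_mk A, map_sum]
      simp only [map_smul, Ideal.Quotient.mkₐ_eq_mk, hg]
      exact hc
    exact Ideal.Quotient.eq.mp h2.symm
  have hstep := Stmt3Aux.step y I hy g hrepr
  letI : Algebra (MvPowerSeries (Fin n) A) (AdicCompletion I T) :=
    (Stmt3Aux.fHom y I hy).toAlgebra
  show Module.Finite (MvPowerSeries (Fin n) A) (AdicCompletion I T)
  refine ⟨⟨Finset.image (fun j => algebraMap T (AdicCompletion I T) (g j)) Finset.univ, ?_⟩⟩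
  rw [eq_top_iff]
  rintro x -
  obtain ⟨χ, rfl⟩ := AdicCompletion.mk_surjective I T x
  have key : AdicCompletion.mk I T χ =
      ∑ j, (Stmt3Aux.Fc y I g hstep χ j) • algebraMap T (AdicCompletion I T) (g j) := by
    ext t
    rw [AdicCompletion.val_sum_apply]
    have hsmul : ∀ j, ((Stmt3Aux.Fc y I g hstep χ j) •
        algebraMap T (AdicCompletion I T) (g j)).val t =
        Submodule.Quotient.mk (Stmt3Aux.seqFun y (Stmt3Aux.Fc y I g hstep χ j) t * g j) := by
      intro j
      have h1 : (Stmt3Aux.Fc y I g hstep χ j) • algebraMap T (AdicCompletion I T) (g j)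
          = Stmt3Aux.fHom y I hy (Stmt3Aux.Fc y I g hstep χ j)
              * algebraMap T (AdicCompletion I T) (g j) := by
        rw [Algebra.smul_def]
        rfl
      have h2 : ((Stmt3Aux.fHom y I hy (Stmt3Aux.Fc y I g hstep χ j)).val t
          : T ⧸ (I ^ t • ⊤ : Ideal T)) =
          Ideal.Quotient.mk _ (Stmt3Aux.seqFun y (Stmt3Aux.Fc y I g hstep χ j) t) := rfl
      have h3 : (algebraMap T (AdicCompletion I T) (g j)).val t =
          Ideal.Quotient.mk (I ^ t • ⊤ : Ideal T) (g j) := rfl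
      rw [h1, AdicCompletion.val_mul, h2, h3, ← map_mul, ← Ideal.Quotient.mk_eq_mk]
    rw [Finset.sum_congr rfl fun j _ => hsmul j]
    have h4 : ∀ (v : Fin m → T), (∑ j, Submodule.Quotient.mk (p := (I ^ t • ⊤ : Submodule T T))
        (v j)) = Submodule.Quotient.mk (∑ j, v j) := by
      intro v
      simp only [← Submodule.mkQ_apply, ← map_sum]
    rw [h4, Stmt3Aux.sum_seqFun_eq]
    rw [AdicCompletion.mk_apply_coe, Submodule.mkQ_apply, Submodule.Quotient.eq,
      Stmt3Aux.smul_top_eq]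
    exact (Stmt3Aux.appr y I g hstep χ t).prop
  rw [key]
  refine Submodule.sum_mem _ fun j _ => Submodule.smul_mem _ _ (Submodule.subset_span ?_)
  rw [Finset.coe_image]
  exact Set.mem_image_of_mem _ (Finset.mem_coe.mpr (Finset.mem_univ j))
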